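/- arXiv:1207.0166 — 6 statements merged into one kernel-verified Lean document; each statement's English description precedes it below -/
import Mathlib

section
/- Fix probabilities p_1,...,p_K ∈ [0,1], a ∈ [0,1), and costs c(j,s) with 1 ≥ c(1,s) ≥ c(2,s) ≥ ... ≥ c(s,s) ≥ 0 for each s. Define the expected loss of an ordered subset Y = (j_1,...,j_s) of distinct elements of [K] as E(Y) = (1−a)·Σ_{i∈Y}( c(j_i,s) − (a/(1−a)+c(j_i,s))·p_i ). Then for each fixed size s, an ordered subset minimizing E over all ordered subsets of size s is obtained by taking the s classes with largest p_i, listed in nonincreasing order of p_i. -/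
open Finset



/-- sum over range of getD equals map-sum. -/
lemma sum_range_getD {α : Type*} (f : α → ℝ) (d : α) :
    ∀ t : List α, ∑ i ∈ range t.length, f (t.getD i d) = (t.map f).sum := by
  intro t
  induction t with
  | nil => simp
  | cons x xs ih =>
      rw [List.length_cons, Finset.sum_range_succ']
      simp only [List.getD_cons_succ, List.getD_cons_zero, List.map_cons, List.sum_cons, ih]
      ring

/-- Abel / rearrangement: weighted sums with antitone nonneg weights respect
prefix-sum domination. -/
lemma weighted_prefix_le (s : ℕ) (w f g : ℕ → ℝ)
    (hw0 : ∀ i, i < s → 0 ≤ w i)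
    (hwa : ∀ i, i + 1 < s → w (i + 1) ≤ w i)
    (hpre : ∀ m, m ≤ s → (∑ i ∈ range m, f i) ≤ ∑ i ∈ range m, g i) :
    ∑ i ∈ range s, w i * f i ≤ ∑ i ∈ range s, w i * g i := by
  rcases Nat.eq_zero_or_pos s with hs | hs
  · simp [hs]
  have hb := Finset.sum_range_by_parts (M := ℝ) (R := ℝ) w f s
  have hb' := Finset.sum_range_by_parts (M := ℝ) (R := ℝ) w g s
  simp only [smul_eq_mul] at hb hb'
  rw [hb, hb']
  apply sub_le_sub
  · apply mul_le_mul_of_nonneg_left (hpre s le_rfl)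
    exact hw0 (s - 1) (Nat.sub_lt hs one_pos)
  · apply Finset.sum_le_sum
    intro i hi
    rw [Finset.mem_range] at hi
    have hi' : i + 1 < s := by omega
    have hcoef : w (i + 1) - w i ≤ 0 := sub_nonpos.mpr (hwa i hi')
    exact mul_le_mul_of_nonpos_left (hpre (i + 1) (by omega)) hcoef

/-- for each fixed size `s`, the expected loss over ordered subsets of size `s`
is minimized by listing the `s` classes with largest `p i` in nonincreasing order of `p`. -/
theorem bayes_optimal_fixed_size (K : ℕ) (p : Fin K → ℝ)
    (hp : ∀ i, 0 ≤ p i ∧ p i ≤ 1)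
    (a : ℝ) (ha0 : 0 ≤ a) (ha1 : a < 1)
    (c : ℕ → ℕ → ℝ) (hc01 : ∀ j s, 0 ≤ c j s ∧ c j s ≤ 1)
    (hcmono : ∀ s j j', 1 ≤ j → j ≤ j' → j' ≤ s → c j' s ≤ c j s)
    (s : ℕ) (hs : s ≤ K)
    (E : List (Fin K) → ℝ)
    (hE : ∀ l : List (Fin K),
      E l = (1 - a) * ∑ idx : Fin l.length,
        (c (idx + 1) l.length - (a / (1 - a) + c (idx + 1) l.length) * p (l.get idx)))
    (lstar : List (Fin K)) (hnodup : lstar.Nodup) (hlen : lstar.length = s)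
    -- `lstar` is sorted in nonincreasing order of `p`
    (hsorted : lstar.Pairwise (fun i k => p k ≤ p i))
    -- `lstar` consists of the `s` classes with largest `p`
    (htop : ∀ i ∈ lstar, ∀ j : Fin K, j ∉ lstar → p j ≤ p i) :
    ∀ l : List (Fin K), l.Nodup → l.length = s → E lstar ≤ E l := by
  intro l hnd hl
  rcases Nat.eq_zero_or_pos s with hs0 | hspos
  · have h1 : lstar = [] := List.length_eq_zero_iff.mp (by omega)
    have h2 : l = [] := List.length_eq_zero_iff.mp (by omega)
    rw [h1, h2]
  have hK : 0 < K := lt_of_lt_of_le hspos hs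
  set d : Fin K := ⟨0, hK⟩ with hd
  have h1a : (0:ℝ) < 1 - a := by linarith
  -- key claim: any finset of size m ≤ s has p-sum at most the first-m prefix sum of lstar
  have topsum : ∀ m, m ≤ s → ∀ S : Finset (Fin K), S.card = m →
      ∑ x ∈ S, p x ≤ ∑ i ∈ range m, p (lstar.getD i d) := by
    intro m
    induction m with
    | zero =>
        intro _ S hS
        rw [Finset.card_eq_zero.mp hS]
        simp
    | succ m ih =>
        intro hm S hS
        have hSne : S.Nonempty := Finset.card_pos.mp (by omega)
        obtain ⟨x0, hx0S, hx0min⟩ := Finset.exists_min_image S p hSne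
        have hmlt : m < lstar.length := by omega
        have hgetD : lstar.getD m d = lstar.get ⟨m, hmlt⟩ := by
          rw [List.getD_eq_getElem lstar d hmlt, List.get_eq_getElem]
        -- p x0 ≤ p (lstar.get m)
        have hx0 : p x0 ≤ p (lstar.get ⟨m, hmlt⟩) := by
          by_contra hcon
          push_neg at hcon
          -- every y ∈ S appears in lstar.take m
          have hsub : S ⊆ (lstar.take m).toFinset := by
            intro y hy
            have hpy : p (lstar.get ⟨m, hmlt⟩) < p y := lt_of_lt_of_le hcon (hx0min y hy)
            have hymem : y ∈ lstar := by
              by_contra hyn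
              exact absurd (htop _ (List.get_mem lstar ⟨m, hmlt⟩) y hyn) (not_le.mpr hpy)
            obtain ⟨j, hj⟩ := List.mem_iff_get.mp hymem
            have hjm : (j : ℕ) < m := by
              rcases lt_trichotomy (j : ℕ) m with h | h | h
              · exact h
              · exfalso
                have hy' : y = lstar.get ⟨m, hmlt⟩ := by
                  rw [← hj]; congr 1; exact Fin.ext h
                rw [hy'] at hpy; exact lt_irrefl _ hpy
              · exfalso
                have h2 := (List.pairwise_iff_get.mp hsorted) ⟨m, hmlt⟩ j
                  (by rwa [Fin.lt_def])
                rw [hj] at h2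
                exact absurd hpy (not_lt.mpr h2)
            have hglt : (j : ℕ) < (lstar.take m).length := by
              rw [List.length_take]; omega
            have hy2 : y = (lstar.take m)[(j : ℕ)] := by
              rw [← hj, List.get_eq_getElem]
              exact List.getElem_take.symm
            rw [List.mem_toFinset, hy2]
            exact List.getElem_mem _
          have hcard : S.card ≤ m := by
            calc S.card ≤ (lstar.take m).toFinset.card := Finset.card_le_card hsub
            _ ≤ (lstar.take m).length := (lstar.take m).toFinset_card_le
            _ ≤ m := by rw [List.length_take]; omega
          omega
        have herase : (S.erase x0).card = m := by
          rw [Finset.card_erase_of_mem hx0S, hS]; omega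
        have hsum : ∑ x ∈ S, p x = (∑ x ∈ S.erase x0, p x) + p x0 := by
          rw [Finset.sum_erase_add S p hx0S]
        rw [hsum, Finset.sum_range_succ, hgetD]
        exact add_le_add (ih (by omega) _ herase) hx0
  -- prefix-sum domination for any nodup list of length s
  have hpre : ∀ (t : List (Fin K)), t.Nodup → t.length = s → ∀ m, m ≤ s →
      ∑ i ∈ range m, p (t.getD i d) ≤ ∑ i ∈ range m, p (lstar.getD i d) := by
    intro t hndt hlt m hm
    have htake : (t.take m).Nodup := hndt.sublist (List.take_sublist m t)
    have htlen : (t.take m).length = m := by rw [List.length_take]; omega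
    have hcard : (t.take m).toFinset.card = m := by
      rw [List.toFinset_card_of_nodup htake, htlen]
    have heq : ∑ i ∈ range m, p (t.getD i d) = ∑ x ∈ (t.take m).toFinset, p x := by
      rw [List.sum_toFinset p htake, ← sum_range_getD p d (t.take m), htlen]
      apply Finset.sum_congr rfl
      intro i hi
      rw [Finset.mem_range] at hi
      congr 1
      rw [List.getD_eq_getElem (t.take m) d (by omega : i < (t.take m).length),
        List.getD_eq_getElem t d (by omega : i < t.length)]
      exact List.getElem_take.symm
    rw [heq]
    exact topsum m hm _ hcard
  -- rewrite E as a range sum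
  have hErw : ∀ (t : List (Fin K)), t.length = s →
      E t = (1 - a) * ((∑ i ∈ range s, c (i + 1) s)
        - ∑ i ∈ range s, (a / (1 - a) + c (i + 1) s) * p (t.getD i d)) := by
    intro t hlt
    have h1 : ∑ idx : Fin t.length,
        (c (idx + 1) t.length - (a / (1 - a) + c (idx + 1) t.length) * p (t.get idx))
        = ∑ i ∈ range t.length,
          (c (i + 1) t.length - (a / (1 - a) + c (i + 1) t.length) * p (t.getD i d)) := by
      rw [← Fin.sum_univ_eq_sum_range
        (fun i => c (i + 1) t.length - (a / (1 - a) + c (i + 1) t.length) * p (t.getD i d))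
        t.length]
      apply Finset.sum_congr rfl
      intro idx _
      rw [List.getD_eq_getElem t d idx.isLt, List.get_eq_getElem]
    rw [hE t, h1, hlt, ← Finset.sum_sub_distrib]
  rw [hErw l hl, hErw lstar hlen]
  have key : ∑ i ∈ range s, (a / (1 - a) + c (i + 1) s) * p (l.getD i d)
      ≤ ∑ i ∈ range s, (a / (1 - a) + c (i + 1) s) * p (lstar.getD i d) := by
    apply weighted_prefix_le s (fun i => a / (1 - a) + c (i + 1) s)
    · intro i _
      have h1 := (hc01 (i + 1) s).1
      have h2 : 0 ≤ a / (1 - a) := div_nonneg ha0 (le_of_lt h1a)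
      show 0 ≤ a / (1 - a) + c (i + 1) s
      linarith
    · intro i hi
      have := hcmono s (i + 1) (i + 2) (by omega) (by omega) (by omega)
      show a / (1 - a) + c (i + 1 + 1) s ≤ a / (1 - a) + c (i + 1) s
      have h12 : i + 1 + 1 = i + 2 := rfl
      rw [h12]
      linarith
    · exact hpre l hnd hl
  have := mul_le_mul_of_nonneg_left (sub_le_sub_left key (∑ i ∈ range s, c (i + 1) s)) (le_of_lt h1a)
  linarith
end

section
/- Let L : [−R,R] → ℝ₊ be twice differentiable with L''(x) ≥ c'' > 0 for all x, let Δ, Δ̂ ∈ [−R,R] and p = L'(−Δ)/(L'(Δ)+L'(−Δ)). Then p·(L(Δ̂)−L(Δ)) + (1−p)·(L(−Δ̂)−L(−Δ)) ≥ (c''/2)·(Δ̂−Δ)². -/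
open Set

lemma strong_convexity_key (R : ℝ) (hR : 0 < R)
    (L L' L'' : ℝ → ℝ) (c'' : ℝ)
    (hderiv : ∀ x ∈ Icc (-R) R, HasDerivAt L (L' x) x)
    (hderiv2 : ∀ x ∈ Icc (-R) R, HasDerivAt L' (L'' x) x)
    (hsc : ∀ x ∈ Icc (-R) R, c'' ≤ L'' x)
    (x y : ℝ) (hx : x ∈ Icc (-R) R) (hy : y ∈ Icc (-R) R) :
    L' x * (y - x) + c'' / 2 * (y - x) ^ 2 ≤ L y - L x := by
  set g : ℝ → ℝ := fun t => L t - c'' / 2 * t ^ 2 with hg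
  set g' : ℝ → ℝ := fun t => L' t - c'' * t with hg'
  have hgd : ∀ t ∈ Icc (-R) R, HasDerivAt g (g' t) t := by
    intro t ht
    have h1 : HasDerivAt (fun t : ℝ => c'' / 2 * t ^ 2) (c'' / 2 * (2 * t)) t := by
      simpa using ((hasDerivAt_pow 2 t).const_mul (c'' / 2))
    have := (hderiv t ht).sub h1
    exact this.congr_deriv (by simp only [hg']; ring)
  have hgd2 : ∀ t ∈ Icc (-R) R, HasDerivAt g' (L'' t - c'') t := by
    intro t ht
    exact (hderiv2 t ht).sub ((hasDerivAt_id t).const_mul c'' |>.congr_deriv (by ring))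
  have hconv : ConvexOn ℝ (Icc (-R) R) g := by
    apply convexOn_of_hasDerivWithinAt2_nonneg (f' := g') (f'' := fun t => L'' t - c'')
      (convex_Icc _ _)
    · exact fun t ht => (hgd t ht).continuousAt.continuousWithinAt
    · exact fun t ht => ((hgd t (interior_subset ht)).hasDerivWithinAt)
    · exact fun t ht => ((hgd2 t (interior_subset ht)).hasDerivWithinAt)
    · intro t ht
      have := hsc t (interior_subset ht)
      linarith
  have key : g x + g' x * (y - x) ≤ g y := by
    rcases lt_trichotomy x y with h | h | h
    · have := hconv.le_slope_of_hasDerivAt hx hy h (hgd x hx)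
      rw [slope_def_field] at this
      have hxy : 0 < y - x := by linarith
      rw [le_div_iff₀ hxy] at this
      nlinarith
    · simp [h]
    · have := hconv.slope_le_of_hasDerivAt hy hx h (hgd x hx)
      rw [slope_def_field] at this
      have hxy : 0 < x - y := by linarith
      have : (g x - g y) / (x - y) ≤ g' x := this
      rw [div_le_iff₀ hxy] at this
      nlinarith
  simp only [hg, hg'] at key
  nlinarith [key]

/-- strong-convexity lower bound on the mixture excess loss. -/
theorem mixture_excess_lower_bound (R : ℝ) (hR : 0 < R)
    (L L' L'' : ℝ → ℝ) (c'' : ℝ) (hc'' : 0 < c'')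
    (hL0 : ∀ x ∈ Icc (-R) R, 0 ≤ L x)
    (hderiv : ∀ x ∈ Icc (-R) R, HasDerivAt L (L' x) x)
    (hderiv2 : ∀ x ∈ Icc (-R) R, HasDerivAt L' (L'' x) x)
    (hsc : ∀ x ∈ Icc (-R) R, c'' ≤ L'' x)
    (Δ Δhat : ℝ) (hΔ : Δ ∈ Icc (-R) R) (hΔhat : Δhat ∈ Icc (-R) R)
    (hden : L' Δ + L' (-Δ) ≠ 0)
    (p : ℝ) (hp : p = L' (-Δ) / (L' Δ + L' (-Δ)))
    (hp01 : 0 ≤ p ∧ p ≤ 1) :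
    c'' / 2 * (Δhat - Δ) ^ 2
      ≤ p * (L Δhat - L Δ) + (1 - p) * (L (-Δhat) - L (-Δ)) := by
  obtain ⟨hp0, hp1⟩ := hp01
  have hnΔ : -Δ ∈ Icc (-R) R := by
    constructor <;> [linarith [hΔ.2]; linarith [hΔ.1]]
  have hnΔhat : -Δhat ∈ Icc (-R) R := by
    constructor <;> [linarith [hΔhat.2]; linarith [hΔhat.1]]
  have k1 := strong_convexity_key R hR L L' L'' c'' hderiv hderiv2 hsc Δ Δhat hΔ hΔhat
  have k2 := strong_convexity_key R hR L L' L'' c'' hderiv hderiv2 hsc (-Δ) (-Δhat) hnΔ hnΔhat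
  have hlin : p * L' Δ = (1 - p) * L' (-Δ) := by
    field_simp [hp]
    have : p * (L' Δ + L' (-Δ)) = L' (-Δ) := by rw [hp]; exact div_mul_cancel₀ _ hden
    linarith
  have hlin2 : p * L' Δ * (Δhat - Δ) = (1 - p) * L' (-Δ) * (Δhat - Δ) := by rw [hlin]
  nlinarith [mul_le_mul_of_nonneg_left k1 hp0, mul_le_mul_of_nonneg_left k2 (by linarith : (0:ℝ) ≤ 1 - p), hlin2]
end

section
/- Let L : [−R,R] → ℝ₊ be twice differentiable with (L'(x))² ≤ c' and L''(x) ≥ c'' > 0 for all x ∈ [−R,R], and let p ∈ [0,1] equal L'(−Δ)/(L'(Δ)+L'(−Δ)) for some Δ ∈ [−R,R]. Let S be a {−1,+1}-valued random variable with P(S=1) = p. Then for any Δ̂ ∈ [−R,R], Var(L(S·Δ̂) − L(S·Δ)) ≤ (2c'/c'')·E[L(S·Δ̂) − L(S·Δ)]. -/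
open Set


lemma derivGap (R : ℝ) (L' L'' : ℝ → ℝ) (c'' : ℝ)
    (hderiv2 : ∀ x ∈ Icc (-R) R, HasDerivAt L' (L'' x) x)
    (hsc : ∀ x ∈ Icc (-R) R, c'' ≤ L'' x)
    {u v : ℝ} (hu : u ∈ Icc (-R) R) (hv : v ∈ Icc (-R) R) (huv : u ≤ v) :
    c'' * (v - u) ≤ L' v - L' u := by
  rcases eq_or_lt_of_le huv with h | h
  · subst h; simp
  · have hsub : Icc u v ⊆ Icc (-R) R := Icc_subset_Icc hu.1 hv.2
    have hcont : ContinuousOn L' (Icc u v) := fun t ht =>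
      ((hderiv2 t (hsub ht)).continuousAt).continuousWithinAt
    obtain ⟨c, hc, hceq⟩ := exists_hasDerivAt_eq_slope L' L'' h hcont
      (fun t ht => hderiv2 t (hsub (Ioo_subset_Icc_self ht)))
    have hcR : c ∈ Icc (-R) R := hsub (Ioo_subset_Icc_self hc)
    have h1 : c'' ≤ (L' v - L' u) / (v - u) := hceq ▸ hsc c hcR
    have hvu : (0:ℝ) < v - u := by linarith
    exact (le_div_iff₀ hvu).mp h1

lemma strongConv (R : ℝ) (L L' L'' : ℝ → ℝ) (c'' : ℝ)
    (hderiv : ∀ x ∈ Icc (-R) R, HasDerivAt L (L' x) x)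
    (hderiv2 : ∀ x ∈ Icc (-R) R, HasDerivAt L' (L'' x) x)
    (hsc : ∀ x ∈ Icc (-R) R, c'' ≤ L'' x)
    {x y : ℝ} (hx : x ∈ Icc (-R) R) (hy : y ∈ Icc (-R) R) :
    L' x * (y - x) + c''/2 * (y - x)^2 ≤ L y - L x := by
  set φ : ℝ → ℝ := fun t => L t - c''/2 * t^2 with hφ
  set φ' : ℝ → ℝ := fun t => L' t - c'' * t with hφ'
  have hφd : ∀ t ∈ Icc (-R) R, HasDerivAt φ (φ' t) t := by
    intro t ht
    have h2 : HasDerivAt (fun s : ℝ => c''/2 * s^2) (c''/2 * (2 * t^1)) t :=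
      (hasDerivAt_pow 2 t).const_mul (c''/2)
    have := (hderiv t ht).sub h2
    convert this using 1
    show L' t - c'' * t = _; ring
    all_goals rfl
  have hmono : ∀ u v : ℝ, u ∈ Icc (-R) R → v ∈ Icc (-R) R → u ≤ v → φ' u ≤ φ' v := by
    intro u v hu hv huv
    have := derivGap R L' L'' c'' hderiv2 hsc hu hv huv
    simp only [hφ']
    linarith
  have key : φ' x * (y - x) ≤ φ y - φ x := by
    rcases lt_trichotomy x y with h | h | h
    · have hsub : Icc x y ⊆ Icc (-R) R := Icc_subset_Icc hx.1 hy.2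
      have hcont : ContinuousOn φ (Icc x y) := fun t ht =>
        ((hφd t (hsub ht)).continuousAt).continuousWithinAt
      obtain ⟨c, hc, hceq⟩ := exists_hasDerivAt_eq_slope φ φ' h hcont
        (fun t ht => hφd t (hsub (Ioo_subset_Icc_self ht)))
      have hcR : c ∈ Icc (-R) R := hsub (Ioo_subset_Icc_self hc)
      have hm : φ' x ≤ φ' c := hmono x c hx hcR hc.1.le
      have hyx : (0:ℝ) < y - x := by linarith
      have : φ y - φ x = φ' c * (y - x) := by
        field_simp at hceq; linarith [hceq]
      rw [this]
      nlinarith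
    · subst h; simp
    · have hsub : Icc y x ⊆ Icc (-R) R := Icc_subset_Icc hy.1 hx.2
      have hcont : ContinuousOn φ (Icc y x) := fun t ht =>
        ((hφd t (hsub ht)).continuousAt).continuousWithinAt
      obtain ⟨c, hc, hceq⟩ := exists_hasDerivAt_eq_slope φ φ' h hcont
        (fun t ht => hφd t (hsub (Ioo_subset_Icc_self ht)))
      have hcR : c ∈ Icc (-R) R := hsub (Ioo_subset_Icc_self hc)
      have hm : φ' c ≤ φ' x := hmono c x hcR hx hc.2.le
      have hyx : (0:ℝ) < x - y := by linarith
      have : φ x - φ y = φ' c * (x - y) := by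
        field_simp at hceq; linarith [hceq]
      nlinarith
  simp only [hφ, hφ'] at key
  nlinarith [key]

lemma lipsq (R : ℝ) (L L' : ℝ → ℝ) (c' : ℝ)
    (hderiv : ∀ x ∈ Icc (-R) R, HasDerivAt L (L' x) x)
    (hgrad : ∀ x ∈ Icc (-R) R, (L' x) ^ 2 ≤ c')
    {x y : ℝ} (hx : x ∈ Icc (-R) R) (hy : y ∈ Icc (-R) R) :
    (L y - L x)^2 ≤ c' * (y - x)^2 := by
  have main : ∀ u v : ℝ, u ∈ Icc (-R) R → v ∈ Icc (-R) R → u < v →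
      (L v - L u)^2 ≤ c' * (v - u)^2 := by
    intro u v hu hv h
    have hsub : Icc u v ⊆ Icc (-R) R := Icc_subset_Icc hu.1 hv.2
    have hcont : ContinuousOn L (Icc u v) := fun t ht =>
      ((hderiv t (hsub ht)).continuousAt).continuousWithinAt
    obtain ⟨c, hc, hceq⟩ := exists_hasDerivAt_eq_slope L L' h hcont
      (fun t ht => hderiv t (hsub (Ioo_subset_Icc_self ht)))
    have hcR : c ∈ Icc (-R) R := hsub (Ioo_subset_Icc_self hc)
    have hvu : (0:ℝ) < v - u := by linarith
    have heq : L v - L u = L' c * (v - u) := by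
      field_simp at hceq; linarith [hceq]
    rw [heq]
    have := hgrad c hcR
    nlinarith [sq_nonneg (v - u)]
  rcases lt_trichotomy x y with h | h | h
  · exact main x y hx hy h
  · subst h; simp
  · have := main y x hy hx h
    nlinarith [this]

/-- the variance of the loss difference is bounded by a constant times its
expectation.  The random sign `S` takes value `1` with probability `p` and `-1` with
probability `1-p`; expectation and variance are written out explicitly. -/
theorem variance_le_expectation (R : ℝ) (hR : 0 < R)
    (L L' L'' : ℝ → ℝ) (c' c'' : ℝ) (hc'' : 0 < c'')
    (hL0 : ∀ x ∈ Icc (-R) R, 0 ≤ L x)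
    (hconv : ConvexOn ℝ (Icc (-R) R) L)
    (hderiv : ∀ x ∈ Icc (-R) R, HasDerivAt L (L' x) x)
    (hderiv2 : ∀ x ∈ Icc (-R) R, HasDerivAt L' (L'' x) x)
    (hgrad : ∀ x ∈ Icc (-R) R, (L' x) ^ 2 ≤ c')
    (hsc : ∀ x ∈ Icc (-R) R, c'' ≤ L'' x)
    (Δ Δhat : ℝ) (hΔ : Δ ∈ Icc (-R) R) (hΔhat : Δhat ∈ Icc (-R) R)
    (hden : L' Δ + L' (-Δ) ≠ 0)
    (p : ℝ) (hp : p = L' (-Δ) / (L' Δ + L' (-Δ)))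
    (hp01 : 0 ≤ p ∧ p ≤ 1)
    -- X s = L(s·Δhat) - L(s·Δ), its mean and variance under P(S=1)=p, P(S=-1)=1-p
    (X : ℝ → ℝ) (hX : ∀ s : ℝ, X s = L (s * Δhat) - L (s * Δ))
    (EX VarX : ℝ)
    (hEX : EX = p * X 1 + (1 - p) * X (-1))
    (hVarX : VarX = p * (X 1) ^ 2 + (1 - p) * (X (-1)) ^ 2 - EX ^ 2) :
    VarX ≤ (2 * c' / c'') * EX := by
  obtain ⟨hp0, hp1⟩ := hp01
  have hnΔ : -Δ ∈ Icc (-R) R := by constructor <;> [linarith [hΔ.2]; linarith [hΔ.1]]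
  have hnΔhat : -Δhat ∈ Icc (-R) R := by
    constructor <;> [linarith [hΔhat.2]; linarith [hΔhat.1]]
  have ha : X 1 = L Δhat - L Δ := by rw [hX]; norm_num
  have hb : X (-1) = L (-Δhat) - L (-Δ) := by rw [hX]; norm_num
  set a := X 1
  set b := X (-1)
  set d := Δhat - Δ with hd
  -- strong convexity bounds
  have h1 : L' Δ * d + c''/2 * d^2 ≤ a := by
    have := strongConv R L L' L'' c'' hderiv hderiv2 hsc hΔ hΔhat
    rw [ha]; exact this
  have h2 : L' (-Δ) * (-d) + c''/2 * d^2 ≤ b := by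
    have := strongConv R L L' L'' c'' hderiv hderiv2 hsc hnΔ hnΔhat
    rw [hb]
    have he : -Δhat - -Δ = -d := by rw [hd]; ring
    rw [he] at this
    have hsq : (-d)^2 = d^2 := by ring
    rw [hsq] at this
    exact this
  -- cancellation of linear terms
  have hkey : p * L' Δ - (1 - p) * L' (-Δ) = 0 := by
    rw [hp]; field_simp; ring
  -- lower bound on EX
  have hE : c''/2 * d^2 ≤ EX := by
    rw [hEX]
    have hkey' : (p * L' Δ - (1 - p) * L' (-Δ)) * d = 0 := by rw [hkey]; ring
    nlinarith [mul_le_mul_of_nonneg_left h1 hp0,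
      mul_le_mul_of_nonneg_left h2 (by linarith : (0:ℝ) ≤ 1 - p), hkey']
  -- Lipschitz bound
  have hu : (L Δhat - L Δ)^2 ≤ c' * d^2 :=
    lipsq R L L' c' hderiv hgrad hΔ hΔhat
  have hv : (L (-Δhat) - L (-Δ))^2 ≤ c' * d^2 := by
    have := lipsq R L L' c' hderiv hgrad hnΔ hnΔhat
    have he : -Δhat - -Δ = -d := by rw [hd]; ring
    rw [he] at this
    have hsq : (-d)^2 = d^2 := by ring
    rw [hsq] at this
    exact this
  have hab : (a - b)^2 ≤ 4 * c' * d^2 := by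
    rw [ha, hb]
    nlinarith [hu, hv, sq_nonneg ((L Δhat - L Δ) + (L (-Δhat) - L (-Δ)))]
  have hvar : VarX = p * (1 - p) * (a - b)^2 := by rw [hVarX, hEX]; ring
  have hc'0 : 0 ≤ c' := le_trans (sq_nonneg _) (hgrad Δ hΔ)
  have hstep1 : VarX ≤ c' * d^2 := by
    rw [hvar]
    have hpp : p * (1 - p) ≤ 1/4 := by nlinarith [sq_nonneg (p - 1/2)]
    have := mul_le_mul_of_nonneg_right hpp (sq_nonneg (a - b))
    linarith [this, hab]
  have hstep2 : c' * d^2 ≤ (2 * c' / c'') * EX := by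
    have h3 : (2 * c' / c'') * (c''/2 * d^2) ≤ (2 * c' / c'') * EX :=
      mul_le_mul_of_nonneg_left hE (by positivity)
    have h4 : (2 * c' / c'') * (c''/2 * d^2) = c' * d^2 := by
      field_simp
    linarith [h3, h4.symm.le]
  calc VarX ≤ c' * d^2 := hstep1
    _ ≤ (2 * c' / c'') * EX := hstep2
end

section
/- Among all subsets Y ⊆ [K] of size at most S, the function Y ↦ Σ_{i,j∈Y, i<j}(min{p_i,p_j} − p_i·p_j) − S·Σ_{i∈Y} p_i is minimized by the set consisting of the S indices with the largest values p_i (assuming all p_i are distinct). -/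
open Finset

lemma pairSum_insert {K : ℕ} (F : Fin K → Fin K → ℝ)
    (hsym : ∀ i j, F i j = F j i) {Y : Finset (Fin K)} {k : Fin K} (hk : k ∉ Y) :
    (∑ i ∈ insert k Y, ∑ j ∈ (insert k Y).filter (fun j => i < j), F i j)
      = (∑ i ∈ Y, ∑ j ∈ Y.filter (fun j => i < j), F i j) + ∑ i ∈ Y, F i k := by
  rw [Finset.sum_insert hk]
  have h1 : (insert k Y).filter (fun j => k < j) = Y.filter (fun j => k < j) := by
    rw [filter_insert]; simp
  have h2 : ∀ i ∈ Y, (∑ j ∈ (insert k Y).filter (fun j => i < j), F i j)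
      = (∑ j ∈ Y.filter (fun j => i < j), F i j) + (if i < k then F i k else 0) := by
    intro i hi
    rw [filter_insert]
    by_cases h : i < k
    · rw [if_pos h, Finset.sum_insert (fun hmem => hk (Finset.mem_of_mem_filter k hmem)), if_pos h]
      ring
    · rw [if_neg h, if_neg h]; ring
  have h3 : (∑ j ∈ Y.filter (fun j => k < j), F k j) = ∑ i ∈ Y, if k < i then F i k else 0 := by
    rw [Finset.sum_filter]
    exact Finset.sum_congr rfl (fun i _ => by by_cases h : k < i <;> simp [h, hsym])
  have h4 : ∀ i ∈ Y, ((if k < i then F i k else 0) + if i < k then F i k else 0) = F i k := by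
    intro i hi
    have hne : i ≠ k := fun h => hk (h ▸ hi)
    rcases lt_or_gt_of_ne hne with h | h
    · simp [h, not_lt.2 h.le]
    · simp [h, not_lt.2 h.le]
  have h5 : (∑ i ∈ Y, if k < i then F i k else 0) + (∑ i ∈ Y, if i < k then F i k else 0)
      = ∑ i ∈ Y, F i k := by
    rw [← Finset.sum_add_distrib]; exact Finset.sum_congr rfl h4
  rw [h1, Finset.sum_congr rfl h2, Finset.sum_add_distrib, h3]
  linarith

/-- among subsets of size at most `S`, the partial ranking risk functional `G`
is minimized by the set of the `S` indices with largest `p`. -/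
theorem top_S_minimizes (K S : ℕ) (hS : 1 ≤ S) (hSK : S ≤ K)
    (p : Fin K → ℝ) (hp01 : ∀ i, p i ∈ Set.Icc (0 : ℝ) 1)
    (hdistinct : Function.Injective p)
    (G : Finset (Fin K) → ℝ)
    (hG : ∀ Y : Finset (Fin K),
      G Y = (∑ i ∈ Y, ∑ j ∈ Y.filter (fun j => i < j), (min (p i) (p j) - p i * p j))
            - (S : ℝ) * ∑ i ∈ Y, p i)
    (Ytop : Finset (Fin K)) (hcardtop : Ytop.card = S)
    (htop : ∀ i ∈ Ytop, ∀ j : Fin K, j ∉ Ytop → p j < p i) :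
    ∀ Y : Finset (Fin K), Y.card ≤ S → G Ytop ≤ G Y := by
  set F : Fin K → Fin K → ℝ := fun i j => min (p i) (p j) - p i * p j with hF
  have hsym : ∀ i j, F i j = F j i := by
    intro i j; simp only [hF]; rw [min_comm, mul_comm]
  -- G on insert
  have hGins : ∀ (Y : Finset (Fin K)) (k : Fin K), k ∉ Y →
      G (insert k Y) = G Y + (∑ i ∈ Y, F i k) - (S : ℝ) * p k := by
    intro Y k hk
    rw [hG, hG, pairSum_insert F hsym hk, Finset.sum_insert hk]
    ring
  -- each F i k ≤ p k
  have hFle : ∀ i k, F i k ≤ p k := by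
    intro i k
    have h1 := (hp01 i).1
    have h2 := (hp01 k).1
    have : min (p i) (p k) ≤ p k := min_le_right _ _
    have : 0 ≤ p i * p k := mul_nonneg h1 h2
    simp only [hF]
    nlinarith [min_le_right (p i) (p k)]
  -- F z i - F z j ≤ p i - p j when p j ≤ p i
  have hFdiff : ∀ z i j, p j ≤ p i → F z i - F z j ≤ p i - p j := by
    intro z i j hji
    have hz0 := (hp01 z).1
    have hmin : min (p z) (p i) - min (p z) (p j) ≤ p i - p j := by
      rcases le_total (p z) (p j) with h | h
      · rw [min_eq_left h, min_eq_left (h.trans hji)]; linarith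
      · rw [min_eq_right h]
        rcases le_total (p z) (p i) with h' | h'
        · rw [min_eq_left h']; linarith
        · rw [min_eq_right h']
    have hmul : 0 ≤ p z * (p i - p j) := mul_nonneg hz0 (by linarith)
    simp only [hF]; nlinarith
  -- Step 1: extend a small set to a set of size S without increasing G
  have extend : ∀ n (Y : Finset (Fin K)), Y.card + n = S →
      ∃ Y', Y'.card = S ∧ G Y' ≤ G Y := by
    intro n
    induction n with
    | zero => intro Y h; exact ⟨Y, by omega, le_refl _⟩
    | succ n ih =>
      intro Y h
      have hlt : Y.card < K := by omega
      have hcompl : (Yᶜ : Finset (Fin K)).Nonempty := by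
        rw [← Finset.card_pos, Finset.card_compl, Fintype.card_fin]; omega
      obtain ⟨k, hkc⟩ := hcompl
      have hk : k ∉ Y := Finset.mem_compl.mp hkc
      obtain ⟨Y', hc, hle⟩ := ih (insert k Y) (by rw [Finset.card_insert_of_notMem hk]; omega)
      refine ⟨Y', hc, hle.trans ?_⟩
      rw [hGins Y k hk]
      have hsum : (∑ i ∈ Y, F i k) ≤ (Y.card : ℝ) * p k := by
        calc (∑ i ∈ Y, F i k) ≤ ∑ _i ∈ Y, p k := Finset.sum_le_sum (fun i _ => hFle i k)
        _ = (Y.card : ℝ) * p k := by rw [Finset.sum_const, nsmul_eq_mul]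
      have hpk0 := (hp01 k).1
      have hcardle : (Y.card : ℝ) ≤ (S : ℝ) - 1 := by
        have : Y.card + 1 ≤ S := by omega
        have h := Nat.cast_le (α := ℕ) |>.mpr this
        have h2 : ((Y.card + 1 : ℕ) : ℝ) ≤ ((S : ℕ) : ℝ) := Nat.cast_le.mpr this
        push_cast at h2; linarith
      nlinarith
  -- Step 2: swap argument for sets of size exactly S
  have swap : ∀ (Y : Finset (Fin K)) (i j : Fin K), j ∈ Y → i ∉ Y → p j < p i →
      Y.card = S → G (insert i (Y.erase j)) ≤ G Y := by
    intro Y i j hj hi hpji hcard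
    have hiZ : i ∉ Y.erase j := fun h => hi (Finset.mem_of_mem_erase h)
    have hjZ : j ∉ Y.erase j := Finset.notMem_erase _ _
    have hY : insert j (Y.erase j) = Y := Finset.insert_erase hj
    have h1 := hGins (Y.erase j) i hiZ
    have h2 := hGins (Y.erase j) j hjZ
    rw [hY] at h2
    have hsum : (∑ z ∈ Y.erase j, F z i) - (∑ z ∈ Y.erase j, F z j)
        ≤ ((Y.erase j).card : ℝ) * (p i - p j) := by
      rw [← Finset.sum_sub_distrib]
      calc (∑ z ∈ Y.erase j, (F z i - F z j)) ≤ ∑ _z ∈ Y.erase j, (p i - p j) :=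
        Finset.sum_le_sum (fun z _ => hFdiff z i j hpji.le)
      _ = _ := by rw [Finset.sum_const, nsmul_eq_mul]
    have hcardZ : ((Y.erase j).card : ℝ) = (S : ℝ) - 1 := by
      rw [Finset.card_erase_of_mem hj, hcard]
      have : 1 ≤ S := hS
      push_cast [Nat.cast_sub this]; ring
    rw [hcardZ] at hsum
    have hScast : (1 : ℝ) ≤ (S : ℝ) := by exact_mod_cast hS
    nlinarith
  -- Step 2 induction
  have key : ∀ n (Y : Finset (Fin K)), Y.card = S → (Y \ Ytop).card = n → G Ytop ≤ G Y := by
    intro n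
    induction n with
    | zero =>
      intro Y hcard hdiff
      have hsub : Y ⊆ Ytop := by
        rw [← Finset.sdiff_eq_empty_iff_subset]
        exact Finset.card_eq_zero.mp hdiff
      have : Y = Ytop := Finset.eq_of_subset_of_card_le hsub (by omega)
      rw [this]
    | succ n ih =>
      intro Y hcard hdiff
      have hjne : (Y \ Ytop).Nonempty := Finset.card_pos.mp (by omega)
      obtain ⟨j, hjmem⟩ := hjne
      have hjY : j ∈ Y := (Finset.mem_sdiff.mp hjmem).1
      have hjT : j ∉ Ytop := (Finset.mem_sdiff.mp hjmem).2
      have hine : (Ytop \ Y).Nonempty := by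
        rw [← Finset.card_pos, Finset.card_sdiff_comm (by omega)]
        omega
      obtain ⟨i, himem⟩ := hine
      have hiT : i ∈ Ytop := (Finset.mem_sdiff.mp himem).1
      have hiY : i ∉ Y := (Finset.mem_sdiff.mp himem).2
      have hpji : p j < p i := htop i hiT j hjT
      set Y' := insert i (Y.erase j) with hY'
      have hiZ : i ∉ Y.erase j := fun h => hiY (Finset.mem_of_mem_erase h)
      have hcard' : Y'.card = S := by
        rw [hY', Finset.card_insert_of_notMem hiZ, Finset.card_erase_of_mem hjY]
        omega
      have hdiff' : Y' \ Ytop = (Y \ Ytop).erase j := by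
        ext a
        simp only [hY', Finset.mem_sdiff, Finset.mem_insert, Finset.mem_erase]
        constructor
        · rintro ⟨h | ⟨hne, hY⟩, hT⟩
          · exact absurd (h ▸ hiT) hT
          · exact ⟨hne, hY, hT⟩
        · rintro ⟨hne, hY, hT⟩
          exact ⟨Or.inr ⟨hne, hY⟩, hT⟩
      have hdiffcard : (Y' \ Ytop).card = n := by
        rw [hdiff', Finset.card_erase_of_mem hjmem, hdiff]
        omega
      exact (ih Y' hcard' hdiffcard).trans (swap Y i j hjY hiY hpji hcard)
  -- Combine
  intro Y hY
  obtain ⟨Y', hc, hle⟩ := extend (S - Y.card) Y (by omega)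
  exact (key (Y' \ Ytop).card Y' hc rfl).trans hle
end

section
/- Let A₀ = I (the d×d identity) and A_k = A_{k−1} + s_k·x_k x_k^⊤ for k = 1,...,t, where s_k ∈ {0,1} and ‖x_k‖ = 1. Then Σ_{k=1}^t s_k·x_k^⊤ A_k^{−1} x_k ≤ ln(det(A_t)/det(A₀)) ≤ d·ln(1 + t/d). -/
open Matrix Finset

lemma vmv_mulVec {d : ℕ} (a b w : Fin d → ℝ) :
    (vecMulVec a b) *ᵥ w = (b ⬝ᵥ w) • a := by
  ext i
  simp [vecMulVec_apply, mulVec, dotProduct, Finset.mul_sum, Finset.sum_mul]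
  ring_nf

lemma vmv_posSemidef {d : ℕ} (a : Fin d → ℝ) : (vecMulVec a a).PosSemidef := by
  refine posSemidef_iff_dotProduct_mulVec.mpr ⟨?_, ?_⟩
  · ext i j; simp [vecMulVec_apply, mul_comm]
  · intro y
    have h : star y ⬝ᵥ (vecMulVec a a *ᵥ y) = (a ⬝ᵥ y) * (a ⬝ᵥ y) := by
      rw [vmv_mulVec, dotProduct_smul, smul_eq_mul]
      congr 1
      simp [dotProduct, mul_comm]
    rw [h]
    exact mul_self_nonneg _

lemma trace_eq_sum_eigs {d : ℕ} {A : Matrix (Fin d) (Fin d) ℝ} (hA : A.IsHermitian) :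
    A.trace = ∑ i, hA.eigenvalues i := by
  rw [hA.trace_eq_sum_eigenvalues]
  simp

lemma det_add_smul_vmv {d : ℕ} (B : Matrix (Fin d) (Fin d) ℝ) (v : Fin d → ℝ) (c : ℝ)
    (hB : IsUnit B.det) :
    (B + c • vecMulVec v v).det = B.det * (1 + c * (v ⬝ᵥ B⁻¹ *ᵥ v)) := by
  have h : c • vecMulVec v v = replicateCol Unit (c • v) * replicateRow Unit v := by
    rw [← vecMulVec_eq Unit (c • v) v]
    ext i j
    simp [vecMulVec_apply]
    ring
  rw [h, Matrix.det_add_replicateCol_mul_replicateRow hB]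
  congr 1
  rw [Matrix.det_unique]
  simp [Matrix.mul_apply, dotProduct, mulVec, Finset.mul_sum, Finset.sum_mul]
  rw [Finset.sum_comm]
  exact Finset.sum_congr rfl fun i _ => Finset.sum_congr rfl fun j _ => by ring

/-- telescoping log-determinant bound for rank-one updates. -/
theorem logdet_bound (d t : ℕ) (hd : 1 ≤ d) (ht : 1 ≤ t)
    (x : Fin t → Fin d → ℝ) (hx : ∀ k, x k ⬝ᵥ x k = 1)
    (s : Fin t → ℝ) (hs : ∀ k, s k = 0 ∨ s k = 1)
    (A : ℕ → Matrix (Fin d) (Fin d) ℝ)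
    (hA0 : A 0 = 1)
    (hAk : ∀ k : Fin t, A (k + 1) = A k + s k • vecMulVec (x k) (x k)) :
    (∑ k : Fin t, s k * (x k ⬝ᵥ (A (k + 1))⁻¹.mulVec (x k)))
        ≤ Real.log ((A t).det / (A 0).det)
      ∧ Real.log ((A t).det / (A 0).det) ≤ d * Real.log (1 + t / d) := by
  -- positive definiteness
  have hPD : ∀ k, k ≤ t → (A k).PosDef := by
    intro k
    induction k with
    | zero => intro _; rw [hA0]; exact Matrix.PosDef.one
    | succ k ih =>
      intro hk
      have hk' : k < t := hk
      rw [hAk ⟨k, hk'⟩]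
      refine (ih (le_of_lt hk')).add_posSemidef ?_
      rcases hs ⟨k, hk'⟩ with h | h
      · rw [h, zero_smul]; exact Matrix.PosSemidef.zero
      · rw [h, one_smul]; exact vmv_posSemidef _
  have hdetpos : ∀ k, k ≤ t → 0 < (A k).det := fun k hk => (hPD k hk).det_pos
  -- the telescoping function
  set g : ℕ → ℝ := fun n => Real.log ((A n).det) with hg
  have hstep : ∀ k : Fin t,
      s k * (x k ⬝ᵥ (A (k + 1))⁻¹.mulVec (x k)) ≤ g (k + 1) - g k := by
    intro k
    have hklt : (k : ℕ) < t := k.2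
    have hk1 : (k : ℕ) + 1 ≤ t := hklt
    have hPDk : (A k).PosDef := hPD k (le_of_lt hklt)
    have hPDk1 : (A (k + 1)).PosDef := hPD (k + 1) hk1
    rcases hs k with h0 | h1
    · have hAeq : A ((k : ℕ) + 1) = A k := by
        rw [hAk k, h0, zero_smul, add_zero]
      rw [h0, zero_mul, hg]
      simp [hAeq]
    · -- s k = 1
      set u := x k ⬝ᵥ (A k)⁻¹ *ᵥ x k with hu
      have hxne : x k ≠ 0 := by
        intro h
        have := hx k
        rw [h] at this
        simp [dotProduct] at this
      have hupos : 0 < u := by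
        have hinv : (A (k : ℕ))⁻¹.PosDef := hPDk.inv
        have := (posDef_iff_dotProduct_mulVec.mp hinv).2 hxne
        simpa [hu] using this
      have h1u : (0 : ℝ) < 1 + u := by linarith
      -- determinant lemma
      have hdet : (A ((k : ℕ) + 1)).det = (A k).det * (1 + u) := by
        rw [hAk k, det_add_smul_vmv _ _ _ hPDk.det_pos.ne'.isUnit, h1, one_mul]
      -- inverse formula
      have hinvv : (A ((k : ℕ) + 1))⁻¹ *ᵥ x k = (1 + u)⁻¹ • ((A k)⁻¹ *ᵥ x k) := by
        have hmv : (A ((k : ℕ) + 1)) *ᵥ ((1 + u)⁻¹ • ((A k)⁻¹ *ᵥ x k)) = x k := by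
          rw [hAk k, h1, one_smul]
          rw [Matrix.add_mulVec, Matrix.mulVec_smul, Matrix.mulVec_smul,
            Matrix.mulVec_mulVec, Matrix.mul_nonsing_inv _ hPDk.det_pos.ne'.isUnit,
            Matrix.one_mulVec, vmv_mulVec, ← hu]
          rw [smul_smul, ← add_smul]
          have hone : (1 + u)⁻¹ + (1 + u)⁻¹ * u = 1 := by field_simp
          rw [hone, one_smul]
        calc (A ((k : ℕ) + 1))⁻¹ *ᵥ x k
            = (A ((k : ℕ) + 1))⁻¹ *ᵥ ((A ((k : ℕ) + 1)) *ᵥ ((1 + u)⁻¹ • ((A k)⁻¹ *ᵥ x k))) := by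
              rw [hmv]
          _ = (1 + u)⁻¹ • ((A k)⁻¹ *ᵥ x k) := by
              rw [Matrix.mulVec_mulVec, Matrix.nonsing_inv_mul _ hPDk1.det_pos.ne'.isUnit,
                Matrix.one_mulVec]
      rw [h1, one_mul, hinvv]
      have hdot : x k ⬝ᵥ (1 + u)⁻¹ • ((A k)⁻¹ *ᵥ x k) = (1 + u)⁻¹ * u := by
        rw [dotProduct_smul, smul_eq_mul, hu]
      rw [hdot, hg]
      simp only
      rw [hdet, Real.log_mul (hdetpos k (le_of_lt hklt)).ne' h1u.ne']
      have hlog : 1 - (1 + u)⁻¹ ≤ Real.log (1 + u) :=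
        Real.one_sub_inv_le_log_of_pos h1u
      have : (1 + u)⁻¹ * u = 1 - (1 + u)⁻¹ := by
        field_simp
        ring
      rw [this]
      linarith
  -- telescoping
  have htel : ∑ k : Fin t, (g (k + 1) - g k) = g t - g 0 := by
    rw [Fin.sum_univ_eq_sum_range (fun i => g (i + 1) - g i) t, Finset.sum_range_sub]
  have hdet0 : (A 0).det = 1 := by rw [hA0, Matrix.det_one]
  have hlhs : Real.log ((A t).det / (A 0).det) = g t - g 0 := by
    rw [hdet0, div_one]; simp [hg, hdet0]
  constructor
  · rw [hlhs, ← htel]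
    exact Finset.sum_le_sum fun k _ => hstep k
  · -- upper bound via AM-GM / Jensen
    rw [hlhs]
    have hPDt : (A t).PosDef := hPD t le_rfl
    have hH : (A t).IsHermitian := hPDt.isHermitian
    have hdpos : (0 : ℝ) < d := by exact_mod_cast hd
    -- trace bound
    have htr : (A t).trace ≤ d + t := by
      have hrec : ∀ k, k ≤ t → (A k).trace ≤ d + k := by
        intro k
        induction k with
        | zero => intro _; rw [hA0]; simp [Matrix.trace_one]
        | succ k ih =>
          intro hk
          have hk' : k < t := hk
          rw [hAk ⟨k, hk'⟩, Matrix.trace_add, Matrix.trace_smul]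
          have htrv : (vecMulVec (x ⟨k, hk'⟩) (x ⟨k, hk'⟩)).trace = 1 := by
            rw [Matrix.trace]
            simpa [Matrix.diag, vecMulVec_apply, dotProduct] using hx ⟨k, hk'⟩
          rw [htrv, smul_eq_mul, mul_one]
          have hsle : s ⟨k, hk'⟩ ≤ 1 := by rcases hs ⟨k, hk'⟩ with h | h <;> simp [h]
          have := ih (le_of_lt hk')
          push_cast
          push_cast at this
          linarith
      exact hrec t le_rfl
    -- Jensen for log over eigenvalues
    have heig : ∀ i, 0 < hH.eigenvalues i := hPDt.eigenvalues_pos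
    have hdet_eq : (A t).det = ∏ i, hH.eigenvalues i := by
      have := hH.det_eq_prod_eigenvalues
      simpa using this
    have htr_eq : (A t).trace = ∑ i, hH.eigenvalues i := trace_eq_sum_eigs hH
    have hjensen : ∑ i : Fin d, (d : ℝ)⁻¹ * Real.log (hH.eigenvalues i)
        ≤ Real.log (∑ i : Fin d, (d : ℝ)⁻¹ * hH.eigenvalues i) := by
      have := (strictConcaveOn_log_Ioi.concaveOn).le_map_sum
        (t := (Finset.univ : Finset (Fin d))) (w := fun _ => (d : ℝ)⁻¹)
        (p := fun i => hH.eigenvalues i)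
        (fun i _ => by positivity)
        (by simp [Finset.card_univ]; field_simp)
        (fun i _ => heig i)
      simpa [smul_eq_mul] using this
    have hlogdet : Real.log ((A t).det) = ∑ i, Real.log (hH.eigenvalues i) := by
      rw [hdet_eq, Real.log_prod]
      exact fun i _ => (heig i).ne'
    have hsum_eq : ∑ i : Fin d, (d : ℝ)⁻¹ * hH.eigenvalues i = (A t).trace / d := by
      rw [htr_eq, ← Finset.mul_sum]
      ring
    have h2 : Real.log ((A t).det) ≤ d * Real.log ((A t).trace / d) := by
      rw [hlogdet]
      have : ∑ i, Real.log (hH.eigenvalues i)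
          = d * ∑ i : Fin d, (d : ℝ)⁻¹ * Real.log (hH.eigenvalues i) := by
        rw [← Finset.mul_sum, ← mul_assoc]
        field_simp
      rw [this]
      have := hjensen
      rw [hsum_eq] at this
      nlinarith [this]
    have htrd : (A t).trace / d ≤ 1 + t / d := by
      rw [div_le_iff₀ hdpos, add_mul, one_mul, div_mul_cancel₀ _ hdpos.ne']
      linarith
    have htrpos : 0 < (A t).trace := by
      have : Nonempty (Fin d) := Fin.pos_iff_nonempty.mp hd
      rw [htr_eq]
      exact Finset.sum_pos (fun i _ => heig i) Finset.univ_nonempty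
    calc g t - g 0 = Real.log ((A t).det) := by simp [hg, hdet0]
      _ ≤ d * Real.log ((A t).trace / d) := h2
      _ ≤ d * Real.log (1 + t / d) := by
          refine mul_le_mul_of_nonneg_left ?_ hdpos.le
          exact Real.log_le_log (div_pos htrpos hdpos) htrd
end

section
/- One-step ranking regret: let p : [−R,R] → [0,1] be nondecreasing and c_L-Lipschitz, and suppose Δ_i ∈ [−R,R], Δ̂_i ∈ ℝ, ε_i ≥ 0 with |Δ_i − Δ̂_i| ≤ ε_i for i ∈ [K]. Let p_i = p(Δ_i), p̂⁺_i = p([Δ̂_i+ε_i]_D), p̂⁻_i = p([Δ̂_i−ε_i]_D). For any set Ŷ of size S_t, Σ_{i∈Ŷ}(S_t+1−ĵ_i)(p̂⁺_i − p̂⁻_i) + Σ_{i<j∈Ŷ}(p̂⁺_i p̂⁺_j − p̂⁻_i p̂⁻_j) ≤ 2S_t·c_L·Σ_{i∈Ŷ} ε_i + 2(S_t−1)·c_L·Σ_{i∈Ŷ} ε_i < 4S_t·c_L·Σ_{i∈Ŷ} ε_i (assuming S_t ≥ 1 and Σ_{i∈Ŷ} ε_i > 0). -/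
open Set Finset

/-- one-step ranking regret bound. -/
theorem one_step_ranking_regret (K : ℕ) (hK : 1 ≤ K)
    (R : ℝ) (hR : 0 < R)
    (cL : ℝ) (hcL : 0 < cL) (p : ℝ → ℝ)
    (hmono : MonotoneOn p (Icc (-R) R))
    (hlip : ∀ x ∈ Icc (-R) R, ∀ y ∈ Icc (-R) R, |p x - p y| ≤ cL * |x - y|)
    (hp01 : ∀ x ∈ Icc (-R) R, p x ∈ Icc (0 : ℝ) 1)
    (clip : ℝ → ℝ) (hclip : ∀ x, clip x = max (-R) (min R x))
    (Δ Δhat ε : Fin K → ℝ)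
    (hΔ : ∀ i, Δ i ∈ Icc (-R) R) (hε : ∀ i, 0 ≤ ε i)
    (happrox : ∀ i, |Δ i - Δhat i| ≤ ε i)
    (pplus pminus : Fin K → ℝ)
    (hpplus : ∀ i, pplus i = p (clip (Δhat i + ε i)))
    (hpminus : ∀ i, pminus i = p (clip (Δhat i - ε i)))
    (Yhat : Finset (Fin K)) (St : ℕ) (hSt : Yhat.card = St) (hSt1 : 1 ≤ St)
    (rk : Fin K → ℕ) (hrk : ∀ i ∈ Yhat, 1 ≤ rk i ∧ rk i ≤ St)
    (hsum : 0 < ∑ i ∈ Yhat, ε i) :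
    (∑ i ∈ Yhat, ((St : ℝ) + 1 - (rk i : ℝ)) * (pplus i - pminus i))
        + (∑ i ∈ Yhat, ∑ j ∈ Yhat.filter (fun j => i < j),
            (pplus i * pplus j - pminus i * pminus j))
      ≤ 2 * St * cL * ∑ i ∈ Yhat, ε i + 2 * ((St : ℝ) - 1) * cL * ∑ i ∈ Yhat, ε i
    ∧ (∑ i ∈ Yhat, ((St : ℝ) + 1 - (rk i : ℝ)) * (pplus i - pminus i))
        + (∑ i ∈ Yhat, ∑ j ∈ Yhat.filter (fun j => i < j),
            (pplus i * pplus j - pminus i * pminus j))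
      < 4 * St * cL * ∑ i ∈ Yhat, ε i := by
  have hRR : -R ≤ R := by linarith
  have hclipmem : ∀ x, clip x ∈ Icc (-R) R := by
    intro x; rw [hclip]
    exact ⟨le_max_left _ _, max_le hRR (min_le_left _ _)⟩
  have hclipmono : Monotone clip := by
    intro a b hab; rw [hclip, hclip]
    exact max_le_max le_rfl (min_le_min le_rfl hab)
  have hclipdiff : ∀ a b : ℝ, a ≤ b → clip b - clip a ≤ b - a := by
    intro a b hab
    simp only [hclip, min_def, max_def]
    split_ifs <;> linarith
  -- per-index facts
  have hdiff0 : ∀ i, 0 ≤ pplus i - pminus i := by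
    intro i
    rw [hpplus, hpminus, sub_nonneg]
    exact hmono (hclipmem _) (hclipmem _) (hclipmono (by linarith [hε i]))
  have hdiffle : ∀ i, pplus i - pminus i ≤ 2 * cL * ε i := by
    intro i
    rw [hpplus, hpminus]
    have h1 := hlip _ (hclipmem (Δhat i + ε i)) _ (hclipmem (Δhat i - ε i))
    have h2 : clip (Δhat i + ε i) - clip (Δhat i - ε i) ≤ 2 * ε i := by
      have := hclipdiff (Δhat i - ε i) (Δhat i + ε i) (by linarith [hε i])
      linarith
    have h3 : 0 ≤ clip (Δhat i + ε i) - clip (Δhat i - ε i) :=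
      sub_nonneg.2 (hclipmono (by linarith [hε i]))
    have h4 : |clip (Δhat i + ε i) - clip (Δhat i - ε i)| ≤ 2 * ε i := by
      rw [abs_of_nonneg h3]; exact h2
    calc p (clip (Δhat i + ε i)) - p (clip (Δhat i - ε i))
        ≤ |p (clip (Δhat i + ε i)) - p (clip (Δhat i - ε i))| := le_abs_self _
      _ ≤ cL * |clip (Δhat i + ε i) - clip (Δhat i - ε i)| := h1
      _ ≤ cL * (2 * ε i) := by nlinarith
      _ = 2 * cL * ε i := by ring
  have hplus01 : ∀ i, pplus i ∈ Icc (0:ℝ) 1 := fun i => by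
    rw [hpplus]; exact hp01 _ (hclipmem _)
  have hminus01 : ∀ i, pminus i ∈ Icc (0:ℝ) 1 := fun i => by
    rw [hpminus]; exact hp01 _ (hclipmem _)
  -- first sum bound
  have hA : (∑ i ∈ Yhat, ((St : ℝ) + 1 - (rk i : ℝ)) * (pplus i - pminus i))
      ≤ 2 * St * cL * ∑ i ∈ Yhat, ε i := by
    calc (∑ i ∈ Yhat, ((St : ℝ) + 1 - (rk i : ℝ)) * (pplus i - pminus i))
        ≤ ∑ i ∈ Yhat, (2 * St * cL) * ε i := by
          apply Finset.sum_le_sum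
          intro i hi
          obtain ⟨h1, h2⟩ := hrk i hi
          have h1' : (1:ℝ) ≤ (rk i : ℝ) := by exact_mod_cast h1
          have hSt1' : (1:ℝ) ≤ (St : ℝ) := by exact_mod_cast hSt1
          have hcoef : (St : ℝ) + 1 - (rk i : ℝ) ≤ (St : ℝ) := by linarith
          have hcoef0 : 0 ≤ (St : ℝ) + 1 - (rk i : ℝ) := by
            have : (rk i : ℝ) ≤ (St : ℝ) := by exact_mod_cast h2
            linarith
          calc ((St : ℝ) + 1 - (rk i : ℝ)) * (pplus i - pminus i)
              ≤ (St : ℝ) * (2 * cL * ε i) :=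
                mul_le_mul hcoef (hdiffle i) (hdiff0 i) (by linarith)
            _ = (2 * St * cL) * ε i := by ring
      _ = 2 * St * cL * ∑ i ∈ Yhat, ε i := by rw [← Finset.mul_sum]
  -- cardinality fact: each index lies in exactly St - 1 pairs
  have hcards : ∀ i ∈ Yhat,
      ((Yhat.filter (fun j => i < j)).card : ℝ)
        + ((Yhat.filter (fun j => j < i)).card : ℝ) = (St : ℝ) - 1 := by
    intro i hi
    have hunion : Yhat.filter (fun j => i < j) ∪ Yhat.filter (fun j => j < i)
        = Yhat.erase i := by
      ext j
      simp only [Finset.mem_union, Finset.mem_filter, Finset.mem_erase]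
      constructor
      · rintro (⟨hj, h⟩ | ⟨hj, h⟩)
        · exact ⟨ne_of_gt h, hj⟩
        · exact ⟨ne_of_lt h, hj⟩
      · rintro ⟨hne, hj⟩
        rcases lt_or_gt_of_ne hne with h | h
        · exact Or.inr ⟨hj, h⟩
        · exact Or.inl ⟨hj, h⟩
    have hdisj : Disjoint (Yhat.filter (fun j => i < j)) (Yhat.filter (fun j => j < i)) := by
      rw [Finset.disjoint_left]
      intro j h1 h2
      rw [Finset.mem_filter] at h1 h2
      exact absurd (lt_trans h1.2 h2.2) (lt_irrefl i)
    have hcardeq := Finset.card_union_of_disjoint hdisj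
    rw [hunion, Finset.card_erase_of_mem hi, hSt] at hcardeq
    have : (((Yhat.filter (fun j => i < j)).card + (Yhat.filter (fun j => j < i)).card : ℕ) : ℝ)
        = ((St - 1 : ℕ) : ℝ) := by exact_mod_cast hcardeq.symm
    rw [Nat.cast_add, Nat.cast_sub hSt1, Nat.cast_one] at this
    exact this
  -- second sum bound
  have hB : (∑ i ∈ Yhat, ∑ j ∈ Yhat.filter (fun j => i < j),
      (pplus i * pplus j - pminus i * pminus j))
      ≤ 2 * ((St : ℝ) - 1) * cL * ∑ i ∈ Yhat, ε i := by
    have hterm : ∀ i ∈ Yhat, ∀ j ∈ Yhat.filter (fun j => i < j),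
        pplus i * pplus j - pminus i * pminus j ≤ 2 * cL * ε i + 2 * cL * ε j := by
      intro i _ j _
      have h1 := hdiffle i
      have h2 := hdiffle j
      have h3 := hdiff0 i
      have h4 := hdiff0 j
      obtain ⟨ha, hb⟩ := hplus01 i
      obtain ⟨hc, hd⟩ := hplus01 j
      obtain ⟨he, hf⟩ := hminus01 i
      obtain ⟨hg, hh⟩ := hminus01 j
      nlinarith [mul_nonneg he hg]
    have hswap : (∑ i ∈ Yhat, ∑ j ∈ Yhat.filter (fun j => i < j), 2 * cL * ε j)
        = ∑ j ∈ Yhat, ∑ i ∈ Yhat.filter (fun i => i < j), 2 * cL * ε j := by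
      apply Finset.sum_comm' (f := fun _ j => 2 * cL * ε j)
      intro x y
      simp only [Finset.mem_filter]
      tauto
    calc (∑ i ∈ Yhat, ∑ j ∈ Yhat.filter (fun j => i < j),
          (pplus i * pplus j - pminus i * pminus j))
        ≤ ∑ i ∈ Yhat, ∑ j ∈ Yhat.filter (fun j => i < j), (2 * cL * ε i + 2 * cL * ε j) := by
          apply Finset.sum_le_sum
          intro i hi
          exact Finset.sum_le_sum (hterm i hi)
      _ = (∑ i ∈ Yhat, ∑ j ∈ Yhat.filter (fun j => i < j), 2 * cL * ε i)
          + (∑ i ∈ Yhat, ∑ j ∈ Yhat.filter (fun j => i < j), 2 * cL * ε j) := by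
          rw [← Finset.sum_add_distrib]
          apply Finset.sum_congr rfl
          intro i _
          rw [← Finset.sum_add_distrib]
      _ = ∑ i ∈ Yhat, (((Yhat.filter (fun j => i < j)).card : ℝ)
            + ((Yhat.filter (fun j => j < i)).card : ℝ)) * (2 * cL * ε i) := by
          rw [hswap, ← Finset.sum_add_distrib]
          apply Finset.sum_congr rfl
          intro i _
          rw [Finset.sum_const, Finset.sum_const, nsmul_eq_mul, nsmul_eq_mul]
          ring
      _ = ∑ i ∈ Yhat, ((St : ℝ) - 1) * (2 * cL * ε i) := by
          apply Finset.sum_congr rfl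
          intro i hi
          rw [hcards i hi]
      _ = 2 * ((St : ℝ) - 1) * cL * ∑ i ∈ Yhat, ε i := by
          rw [Finset.mul_sum]
          apply Finset.sum_congr rfl
          intro i _
          ring
  have hSt1' : (1:ℝ) ≤ (St : ℝ) := by exact_mod_cast hSt1
  refine ⟨by linarith, ?_⟩
  have hstrict : 2 * ((St : ℝ) - 1) * cL * ∑ i ∈ Yhat, ε i
      < 2 * (St : ℝ) * cL * ∑ i ∈ Yhat, ε i := by
    have : 2 * ((St : ℝ) - 1) * cL < 2 * (St : ℝ) * cL := by nlinarith
    exact mul_lt_mul_of_pos_right this hsum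
  linarith
end
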